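/- Let g = gcd(a₁, a₂) = a_{k+1} and L = lcm(a₂, …, a_{k+1}). Restricting to the solvable instances, i.e., to those c ∈ {1, …, L} with g ∣ c, one has R(c) ≤ k for every such c, and Σ_{c ∈ {1,…,L}, g ∣ c} R(c) ≤ Σ_{i=1}^{k} i·(L/a_{i+1}); in particular (1/L)·Σ_{c ∈ {1,…,L}, g ∣ c} R(c) ≤ Σ_{i=1}^{k} i/a_{i+1}. -/

import Mathlib

open scoped Classical

/-- The number of recursive calls made by the DEA-R algorithm on input `(a 1, a 2, c)`,
where `a 1, a 2, …, a (k+2)` is the Euclidean remainder sequence: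
the least `i ∈ {1,…,k}` with `a (i + 1) ∣ (c - a i)` if one exists, and `k+1` otherwise. -/
noncomputable def DEA_R (a : ℕ → ℕ) (k : ℕ) (c : ℤ) : ℕ :=
  if ∃ i, 1 ≤ i ∧ i ≤ k ∧ (a (i + 1) : ℤ) ∣ (c - (a i : ℤ))
  then sInf {i | 1 ≤ i ∧ i ≤ k ∧ (a (i + 1) : ℤ) ∣ (c - (a i : ℤ))}
  else k + 1

/-- Counting lemma: the number of `c ∈ [1, L]` in a fixed residue class mod `m`,
where `m ∣ L`, is at most `L / m`. -/
lemma DEA_count_le (L m r : ℕ) (hm : m ∣ L) :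
    ((Finset.Icc 1 L).filter (fun c : ℕ => (m : ℤ) ∣ ((c : ℤ) - (r : ℤ)))).card ≤ L / m := by
  rcases Nat.eq_zero_or_pos L with hL0 | hLpos
  · subst hL0; simp
  have hm0 : 0 < m := by
    rcases Nat.eq_zero_or_pos m with h | h
    · subst h; simp at hm; omega
    · exact h
  refine le_trans (Finset.card_le_card_of_injOn (t := Finset.range (L / m))
    (fun c => (c - 1) / m) ?_ ?_) (le_of_eq (Finset.card_range (L / m)))
  · intro c hc
    simp only [Finset.mem_coe, Finset.mem_filter, Finset.mem_Icc] at hc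
    simp only [Finset.mem_coe, Finset.mem_range]
    exact Nat.div_lt_div_of_lt_of_dvd hm (by omega)
  · intro c hc c' hc' heq
    simp only [Finset.mem_filter, Finset.mem_Icc, Finset.coe_filter, Set.mem_setOf_eq] at hc hc'
    obtain ⟨⟨hc1, hcL⟩, hcd⟩ := hc
    obtain ⟨⟨hc1', hcL'⟩, hcd'⟩ := hc'
    have hd : (m : ℤ) ∣ ((c : ℤ) - (c' : ℤ)) := by
      have := dvd_sub hcd hcd'
      simpa using this
    have e1 : m * ((c - 1) / m) + (c - 1) % m = c - 1 := Nat.div_add_mod _ _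
    have e2 : m * ((c' - 1) / m) + (c' - 1) % m = c' - 1 := Nat.div_add_mod _ _
    have hr1 : (c - 1) % m < m := Nat.mod_lt _ hm0
    have hr2 : (c' - 1) % m < m := Nat.mod_lt _ hm0
    simp only at heq
    rw [heq] at e1
    have key : (c : ℤ) - (c' : ℤ) = ((c - 1) % m : ℕ) - (((c' - 1) % m : ℕ) : ℤ) := by
      omega
    have habs : |(c : ℤ) - (c' : ℤ)| < (m : ℤ) := by
      rw [key, abs_lt]; constructor <;> [skip; skip] <;> push_cast <;> omega
    have := Int.eq_zero_of_abs_lt_dvd hd habs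
    omega

theorem DEA_R_sum_over_solvable_le
    (a : ℕ → ℕ) (k : ℕ) (hk : 1 ≤ k)
    (hb : 1 ≤ a 2) (hab : a 2 < a 1)
    (hrec : ∀ i, 1 ≤ i → i ≤ k → a (i + 2) = a i % a (i + 1))
    (hpos : 0 < a (k + 1)) (hzero : a (k + 2) = 0)
    (L : ℕ) (hL : L = (Finset.Icc 2 (k + 1)).lcm a)
    :
    (∀ c ∈ Finset.Icc 1 L, Nat.gcd (a 1) (a 2) ∣ c → DEA_R a k (c : ℤ) ≤ k) ∧
    (∑ c ∈ (Finset.Icc 1 L).filter (fun c => Nat.gcd (a 1) (a 2) ∣ c), DEA_R a k (c : ℤ))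
        ≤ ∑ i ∈ Finset.Icc 1 k, i * (L / a (i + 1)) ∧
    (∑ c ∈ (Finset.Icc 1 L).filter (fun c => Nat.gcd (a 1) (a 2) ∣ c),
        (DEA_R a k (c : ℤ) : ℚ)) / (L : ℚ)
      ≤ ∑ i ∈ Finset.Icc 1 k, (i : ℚ) / (a (i + 1) : ℚ) := by
  -- `a (k+1)` divides every term of the sequence (downward induction)
  have hdvdseq : ∀ d, d ≤ k + 1 → a (k + 1) ∣ a (k + 2 - d) := by
    intro d
    induction d using Nat.strong_induction_on with
    | _ d ih =>
      intro hd
      match d, hd with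
      | 0, _ => simpa [hzero] using (dvd_zero (a (k + 1)))
      | 1, _ => simpa using dvd_refl (a (k + 1))
      | (d + 2), hd =>
        have hj1 : 1 ≤ k + 2 - (d + 2) := by omega
        have hjk : k + 2 - (d + 2) ≤ k := by omega
        set j := k + 2 - (d + 2) with hj
        have h1 : a (k + 1) ∣ a (j + 1) := by
          have := ih (d + 1) (by omega) (by omega)
          have hje : k + 2 - (d + 1) = j + 1 := by omega
          rwa [hje] at this
        have h2 : a (k + 1) ∣ a (j + 2) := by
          have := ih d (by omega) (by omega)
          have hje : k + 2 - d = j + 2 := by omega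
          rwa [hje] at this
        have hr := hrec j hj1 hjk
        have hEq : a j = a (j + 1) * (a j / a (j + 1)) + a (j + 2) := by
          rw [hr]; rw [Nat.div_add_mod]
        rw [hEq]
        exact dvd_add (Dvd.dvd.mul_right h1 _) h2
  have hA1 : a (k + 1) ∣ a 1 := by
    have := hdvdseq (k + 1) le_rfl
    have he : k + 2 - (k + 1) = 1 := by omega
    rwa [he] at this
  have hA2 : a (k + 1) ∣ a 2 := by
    have := hdvdseq k (by omega)
    have he : k + 2 - k = 2 := by omega
    rwa [he] at this
  have hAg : a (k + 1) ∣ Nat.gcd (a 1) (a 2) := Nat.dvd_gcd hA1 hA2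
  have hAk : a (k + 1) ∣ a k := by
    apply Nat.dvd_of_mod_eq_zero
    rw [← hrec k hk le_rfl]; exact hzero
  -- Key structural fact about DEA_R for solvable instances
  have hR : ∀ c : ℕ, Nat.gcd (a 1) (a 2) ∣ c →
      1 ≤ DEA_R a k (c : ℤ) ∧ DEA_R a k (c : ℤ) ≤ k ∧
      (a (DEA_R a k (c : ℤ) + 1) : ℤ) ∣ ((c : ℤ) - (a (DEA_R a k (c : ℤ)) : ℤ)) := by
    intro c hc
    have hdiv : (a (k + 1) : ℤ) ∣ ((c : ℤ) - (a k : ℤ)) := by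
      have h1 : (a (k + 1) : ℤ) ∣ (c : ℤ) := Int.natCast_dvd_natCast.mpr (hAg.trans hc)
      have h2 : (a (k + 1) : ℤ) ∣ (a k : ℤ) := Int.natCast_dvd_natCast.mpr hAk
      exact dvd_sub h1 h2
    have hex : ∃ i, 1 ≤ i ∧ i ≤ k ∧ (a (i + 1) : ℤ) ∣ ((c : ℤ) - (a i : ℤ)) :=
      ⟨k, hk, le_rfl, hdiv⟩
    have hmem : DEA_R a k (c : ℤ) ∈
        {i | 1 ≤ i ∧ i ≤ k ∧ (a (i + 1) : ℤ) ∣ ((c : ℤ) - (a i : ℤ))} := by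
      rw [DEA_R, if_pos hex]
      exact Nat.sInf_mem (Set.nonempty_def.mpr hex)
    exact hmem
  have part1 : ∀ c ∈ Finset.Icc 1 L, Nat.gcd (a 1) (a 2) ∣ c → DEA_R a k (c : ℤ) ≤ k := by
    intro c _ hc
    exact (hR c hc).2.1
  refine ⟨part1, ?_⟩
  -- part 2
  set S := (Finset.Icc 1 L).filter (fun c => Nat.gcd (a 1) (a 2) ∣ c) with hS
  have hdvdL : ∀ i ∈ Finset.Icc 1 k, a (i + 1) ∣ L := by
    intro i hi
    simp only [Finset.mem_Icc] at hi
    rw [hL]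
    exact Finset.dvd_lcm (by simp only [Finset.mem_Icc]; omega)
  have part2 : (∑ c ∈ S, DEA_R a k (c : ℤ)) ≤ ∑ i ∈ Finset.Icc 1 k, i * (L / a (i + 1)) := by
    have step1 : (∑ c ∈ S, DEA_R a k (c : ℤ))
        = ∑ c ∈ S, ∑ i ∈ Finset.Icc 1 k, (if DEA_R a k (c : ℤ) = i then i else 0) := by
      apply Finset.sum_congr rfl
      intro c hc
      simp only [hS, Finset.mem_filter] at hc
      have h := hR c hc.2
      rw [Finset.sum_ite_eq (Finset.Icc 1 k) (DEA_R a k (c : ℤ)) (fun i => i),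
        if_pos (by simp only [Finset.mem_Icc]; exact ⟨h.1, h.2.1⟩)]
    rw [step1, Finset.sum_comm]
    apply Finset.sum_le_sum
    intro i hi
    rw [← Finset.sum_filter, Finset.sum_const, smul_eq_mul, mul_comm]
    apply Nat.mul_le_mul_left
    calc (S.filter (fun c : ℕ => DEA_R a k (c : ℤ) = i)).card
        ≤ ((Finset.Icc 1 L).filter (fun c : ℕ => (a (i + 1) : ℤ) ∣ ((c : ℤ) - (a i : ℤ)))).card := by
          apply Finset.card_le_card
          intro c hc
          simp only [hS, Finset.mem_filter] at hc ⊢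
          refine ⟨hc.1.1, ?_⟩
          have h := (hR c hc.1.2).2.2
          rwa [hc.2] at h
      _ ≤ L / a (i + 1) := DEA_count_le L (a (i + 1)) (a i) (hdvdL i hi)
  refine ⟨part2, ?_⟩
  -- part 3
  rcases Nat.eq_zero_or_pos L with hL0 | hLpos
  · rw [hL0]
    simp only [Nat.cast_zero, div_zero]
    apply Finset.sum_nonneg
    intro i _
    positivity
  · rw [div_le_iff₀ (by exact_mod_cast hLpos)]
    calc (∑ c ∈ S, (DEA_R a k (c : ℤ) : ℚ))
        = ((∑ c ∈ S, DEA_R a k (c : ℤ) : ℕ) : ℚ) := by push_cast; rfl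
      _ ≤ ((∑ i ∈ Finset.Icc 1 k, i * (L / a (i + 1)) : ℕ) : ℚ) := by exact_mod_cast part2
      _ = ∑ i ∈ Finset.Icc 1 k, (i : ℚ) * ((L / a (i + 1) : ℕ) : ℚ) := by push_cast; rfl
      _ ≤ ∑ i ∈ Finset.Icc 1 k, ((i : ℚ) / (a (i + 1) : ℚ)) * (L : ℚ) := by
          apply Finset.sum_le_sum
          intro i hi
          have hpos' : 0 < a (i + 1) := by
            rcases Nat.eq_zero_or_pos (a (i + 1)) with h | h
            · exfalso; have := hdvdL i hi; rw [h] at this; simp at this; omega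
            · exact h
          have h1 : ((L / a (i + 1) : ℕ) : ℚ) ≤ (L : ℚ) / (a (i + 1) : ℚ) :=
            Nat.cast_div_le
          calc (i : ℚ) * ((L / a (i + 1) : ℕ) : ℚ)
              ≤ (i : ℚ) * ((L : ℚ) / (a (i + 1) : ℚ)) := by
                apply mul_le_mul_of_nonneg_left h1 (by positivity)
            _ = ((i : ℚ) / (a (i + 1) : ℚ)) * (L : ℚ) := by ring
      _ = (∑ i ∈ Finset.Icc 1 k, (i : ℚ) / (a (i + 1) : ℚ)) * (L : ℚ) := by
          rw [Finset.sum_mul]
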